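/- Let p be an odd prime, r ≥ 1, and t an integer such that p^l exactly divides t² − 4 for some odd l with 1 ≤ l < r. Then the number of matrices γ ∈ SL₂(Z/p^rZ) with trace γ ≡ t (mod p^r) equals p^{2r} + p^{2r−1} − p^{2r−(l+1)/2} − p^{2r−(l+3)/2}. -/

import Mathlib

lemma cancel_pow {p r j : ℕ} (hp : p.Prime) (hj : j ≤ r) {x y : ℤ}
    (h : (((p:ℤ)^j * x : ℤ) : ZMod (p^r)) = (((p:ℤ)^j * y : ℤ) : ZMod (p^r))) :
    ((x : ZMod (p^(r-j))) = (y : ZMod (p^(r-j)))) := by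
  rw [ZMod.intCast_eq_intCast_iff, Int.modEq_iff_dvd] at h ⊢
  push_cast at h ⊢
  have hpr : ((p:ℤ))^r = (p:ℤ)^j * (p:ℤ)^(r-j) := by rw [← pow_add]; congr 1; omega
  rw [hpr, ← mul_sub] at h
  exact (mul_dvd_mul_iff_left (pow_ne_zero _ (by exact_mod_cast hp.ne_zero))).mp h

lemma emod_key (n z : ℤ) : n ∣ (z % n - z) := ⟨-(z / n), by rw [Int.emod_def]; ring⟩

lemma fiber_count {p r j : ℕ} (hp : p.Prime) (hj : j ≤ r) (c : ℤ) :
    Nat.card {a : ZMod (p^r) // ((p:ℤ))^j ∣ ((a.val : ℤ) - c)} = p^(r-j) := by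
  haveI : NeZero (p^r) := ⟨pow_ne_zero _ hp.ne_zero⟩
  haveI : NeZero (p^(r-j)) := ⟨pow_ne_zero _ hp.ne_zero⟩
  have hcard : Nat.card (ZMod (p^(r-j))) = p^(r-j) := by
    simp [Nat.card_eq_fintype_card, ZMod.card]
  rw [← hcard]
  symm
  apply Nat.card_eq_of_bijective (fun y : ZMod (p^(r-j)) =>
    (⟨((c + (p:ℤ)^j * (y.val : ℤ) : ℤ) : ZMod (p^r)), by
      rw [ZMod.val_intCast]
      set z : ℤ := c + (p:ℤ)^j * (y.val : ℤ) with hz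
      have h1 : (p:ℤ)^j ∣ (z % ((p:ℤ)^r) - z) := dvd_trans (pow_dvd_pow _ hj) (emod_key _ z)
      have h2 : (p:ℤ)^j ∣ (z - c) := ⟨(y.val : ℤ), by rw [hz]; ring⟩
      have h3 := dvd_add h1 h2
      rw [show (((p^r : ℕ)) : ℤ) = (p:ℤ)^r by push_cast; ring]
      have heq : z % ((p:ℤ)^r) - c = z % ((p:ℤ)^r) - z + (z - c) := by ring
      rw [heq]; exact h3⟩ : {a : ZMod (p^r) // ((p:ℤ))^j ∣ ((a.val : ℤ) - c)}))
  constructor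
  · intro y y' h
    have h' : ((c + (p:ℤ)^j * (y.val : ℤ) : ℤ) : ZMod (p^r)) = ((c + (p:ℤ)^j * (y'.val : ℤ) : ℤ) : ZMod (p^r)) := congrArg Subtype.val h
    have h2 : (((p:ℤ)^j * (y.val : ℤ) : ℤ) : ZMod (p^r)) = (((p:ℤ)^j * (y'.val : ℤ) : ℤ) : ZMod (p^r)) := by
      have := sub_eq_zero.mpr h'
      push_cast at this ⊢
      linear_combination this
    have := cancel_pow hp hj h2
    simpa using this
  · rintro ⟨a, ha⟩
    obtain ⟨w, hw⟩ := ha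
    refine ⟨((w : ℤ) : ZMod (p^(r-j))), ?_⟩
    ext
    have hv := ZMod.val_intCast (n := p^(r-j)) w
    push_cast at hv
    have hdvd : ((p:ℤ))^(r-j) ∣ ((((w:ℤ) : ZMod (p^(r-j))).val : ℤ) - w) := by
      rw [hv]; exact emod_key _ w
    have hfull : ((p:ℤ))^r ∣ ((p:ℤ)^j * ((((w:ℤ) : ZMod (p^(r-j))).val : ℤ) - w)) := by
      have hpr : ((p:ℤ))^r = (p:ℤ)^j * (p:ℤ)^(r-j) := by rw [← pow_add]; congr 1; omega
      rw [hpr]; exact mul_dvd_mul_left _ hdvd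
    show ((c + (p:ℤ)^j * ((((w:ℤ) : ZMod (p^(r-j))).val : ℤ)) : ℤ) : ZMod (p^r)) = a
    have heq2 : ((c + (p:ℤ)^j * ((((w:ℤ) : ZMod (p^(r-j))).val : ℤ)) : ℤ) : ZMod (p^r))
         = (((a.val : ℤ) + (p:ℤ)^j * ((((w:ℤ) : ZMod (p^(r-j))).val : ℤ) - w) : ℤ) : ZMod (p^r)) := by
      congr 1; linear_combination -hw
    rw [heq2, Int.cast_add]
    have hzero : (((p:ℤ)^j * ((((w:ℤ) : ZMod (p^(r-j))).val : ℤ) - w) : ℤ) : ZMod (p^r)) = 0 :=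
      (ZMod.intCast_zmod_eq_zero_iff_dvd _ _).mpr (by push_cast; exact hfull)
    rw [hzero, add_zero]
    simp


lemma isUnit_intCast_zmod {n : ℕ} {u : ℤ} (h : IsCoprime u (n : ℤ)) : IsUnit ((u : ZMod n)) := by
  obtain ⟨a, b, hab⟩ := h
  refine IsUnit.of_mul_eq_one ((a : ZMod n)) ?_
  have := congrArg (Int.cast : ℤ → ZMod n) hab
  push_cast at this
  rw [ZMod.natCast_self] at this
  rw [mul_comm]
  simpa using this

lemma coprime_pow_of_not_dvd {p r : ℕ} (hp : p.Prime) {u : ℤ} (hu : ¬(p:ℤ) ∣ u) :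
    IsCoprime u ((p:ℤ)^r) := by
  apply IsCoprime.pow_right
  rw [Int.isCoprime_iff_gcd_eq_one]
  have h2 : ¬ p ∣ u.natAbs := fun h => hu (Int.dvd_natAbs.mp (Int.natCast_dvd_natCast.mpr h))
  have h3 : Nat.Coprime u.natAbs p := ((Nat.Prime.coprime_iff_not_dvd hp).mpr h2).symm
  have : Int.gcd u (p:ℤ) = Nat.gcd u.natAbs p := by
    unfold Int.gcd; simp
  rw [this]
  exact h3

lemma not_isUnit_p {p r : ℕ} (hp : p.Prime) (hr : 1 ≤ r) : ¬ IsUnit ((p:ℕ) : ZMod (p^r)) := by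
  intro h
  haveI : Fact p.Prime := ⟨hp⟩
  have h2 := h.map (ZMod.castHom (dvd_pow_self p (by omega : r ≠ 0)) (ZMod p))
  rw [map_natCast] at h2
  rw [ZMod.natCast_self] at h2
  exact not_isUnit_zero h2


lemma val_inj' {m : ℕ} [NeZero m] {a b : ZMod m} (h : a.val = b.val) : a = b := by
  have := congrArg (Nat.cast : ℕ → ZMod m) h
  simpa [ZMod.natCast_val, ZMod.cast_id] using this

lemma unit_part_card {n : ℕ} [NeZero n] (m : ZMod n) :
    Nat.card {x : ZMod n × ZMod n // x.1 * x.2 = m ∧ IsUnit x.1} = Nat.card (ZMod n)ˣ := by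
  symm
  apply Nat.card_eq_of_bijective (fun v : (ZMod n)ˣ =>
    (⟨((v : ZMod n), ((v⁻¹ : (ZMod n)ˣ) : ZMod n) * m), by
      refine ⟨?_, v.isUnit⟩
      rw [← mul_assoc, Units.mul_inv, one_mul]⟩ :
      {x : ZMod n × ZMod n // x.1 * x.2 = m ∧ IsUnit x.1}))
  constructor
  · intro v v' h
    exact Units.ext (congrArg (fun z => z.1.1) h)
  · rintro ⟨⟨b, c⟩, hbc, hb⟩
    obtain ⟨v, hv⟩ := hb
    refine ⟨v, ?_⟩
    apply Subtype.ext
    apply Prod.ext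
    · exact hv
    · show ((v⁻¹ : (ZMod n)ˣ) : ZMod n) * m = c
      rw [Units.inv_mul_eq_iff_eq_mul]
      rw [← hbc]
      simp only [hv]


lemma card_units_pow {p r : ℕ} (hp : p.Prime) (hr : 1 ≤ r) :
    Nat.card (ZMod (p^r))ˣ = p^r - p^(r-1) := by
  haveI : NeZero (p^r) := ⟨pow_ne_zero _ hp.ne_zero⟩
  haveI : Fact p.Prime := ⟨hp⟩
  rw [Nat.card_eq_fintype_card, ZMod.card_units_eq_totient, Nat.totient_prime_pow hp (by omega)]
  have h2 : p^(r-1) * p = p^r := by rw [← pow_succ]; congr 1; omega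
  have h1 : p * p^(r-1) = p^r := by rw [← pow_succ']; congr 1; omega
  rw [mul_comm, tsub_mul, one_mul, h1]

lemma pairs_card {p : ℕ} (hp : p.Prime) :
    ∀ k r : ℕ, k < r → ∀ u : ℤ, ¬ (p:ℤ) ∣ u →
    Nat.card {x : ZMod (p^r) × ZMod (p^r) // x.1 * x.2 = (((p:ℤ)^k * u : ℤ) : ZMod (p^r))}
      = (k+1) * (p^r - p^(r-1)) := by
  intro k
  induction k with
  | zero =>
    intro r hr u hu
    haveI : NeZero (p^r) := ⟨pow_ne_zero _ hp.ne_zero⟩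
    have hm : IsUnit ((((p:ℤ)^0 * u : ℤ)) : ZMod (p^r)) := by
      rw [pow_zero, one_mul]
      exact isUnit_intCast_zmod (by push_cast; exact coprime_pow_of_not_dvd hp hu)
    rw [Nat.card_congr (Equiv.subtypeEquivRight (q := fun x : ZMod (p^r) × ZMod (p^r) =>
      x.1 * x.2 = (((p:ℤ)^0 * u : ℤ) : ZMod (p^r)) ∧ IsUnit x.1)
      (fun x => ⟨fun h => ⟨h, isUnit_of_mul_isUnit_left (h ▸ hm)⟩, And.left⟩))]
    rw [unit_part_card, card_units_pow hp (by omega), zero_add, one_mul]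
  | succ k ih =>
    intro r hr u hu
    haveI : NeZero (p^r) := ⟨pow_ne_zero _ hp.ne_zero⟩
    haveI : NeZero (p^(r-1)) := ⟨pow_ne_zero _ hp.ne_zero⟩
    haveI : NeZero p := ⟨hp.ne_zero⟩
    classical
    set m : ZMod (p^r) := (((p:ℤ)^(k+1) * u : ℤ) : ZMod (p^r)) with hm
    set P : ZMod (p^r) × ZMod (p^r) → Prop := fun x => x.1 * x.2 = m with hP
    -- split
    have hsplit : Nat.card {x // P x} =
        Nat.card {x : ZMod (p^r) × ZMod (p^r) // P x ∧ IsUnit x.1}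
        + Nat.card {x : ZMod (p^r) × ZMod (p^r) // P x ∧ ¬ IsUnit x.1} := by
      rw [← Nat.card_sum]
      apply Nat.card_congr
      exact ((Equiv.subtypeSubtypeEquivSubtypeInter P (fun x => IsUnit x.1)).symm.sumCongr
        (Equiv.subtypeSubtypeEquivSubtypeInter P (fun x => ¬ IsUnit x.1)).symm).trans
        (Equiv.sumCompl _) |>.symm
    have hmunit : Nat.card {x : ZMod (p^r) × ZMod (p^r) // P x ∧ IsUnit x.1} = p^r - p^(r-1) := by
      rw [unit_part_card m, card_units_pow hp (by omega)]
    have hnon : Nat.card {x : ZMod (p^r) × ZMod (p^r) // P x ∧ ¬ IsUnit x.1}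
        = p * ((k+1) * (p^(r-1) - p^(r-1-1))) := by
      rw [← ih (r-1) (by omega) u hu]
      rw [show p * Nat.card {y : ZMod (p^(r-1)) × ZMod (p^(r-1)) // y.1 * y.2 = (((p:ℤ)^k * u : ℤ) : ZMod (p^(r-1)))} = Nat.card (ZMod p × {y : ZMod (p^(r-1)) × ZMod (p^(r-1)) // y.1 * y.2 = (((p:ℤ)^k * u : ℤ) : ZMod (p^(r-1)))}) from by rw [Nat.card_prod, Nat.card_zmod]]
      symm
      have hple : 1 ≤ r - 1 := by omega
      have hprr : (p:ℤ) * (p:ℤ)^(r-1) = (p:ℤ)^r := by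
        rw [← pow_succ']; congr 1; omega
      apply Nat.card_eq_of_bijective
        (f := fun z : ZMod p × {y : ZMod (p^(r-1)) × ZMod (p^(r-1)) //
              y.1 * y.2 = (((p:ℤ)^k * u : ℤ) : ZMod (p^(r-1)))} =>
        (⟨(((p * z.2.val.1.val : ℕ) : ZMod (p^r)),
           ((z.2.val.2.val + p^(r-1) * z.1.val : ℕ) : ZMod (p^r))), by
          obtain ⟨j, y⟩ := z
          set b1v := y.val.1.val with hb1v
          set c1v := y.val.2.val with hc1v
          set jv := j.val with hjv
          constructor
          · show (((p * b1v : ℕ)) : ZMod (p^r)) * (((c1v + p^(r-1)*jv : ℕ)) : ZMod (p^r)) = m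
            have e1 : (((b1v : ℤ) * (c1v : ℤ) : ℤ) : ZMod (p^(r-1))) = y.val.1 * y.val.2 := by
              rw [hb1v, hc1v]
              push_cast
              simp [ZMod.natCast_val, ZMod.cast_id]
            have hyc := e1.trans y.property
            rw [ZMod.intCast_eq_intCast_iff, Int.modEq_iff_dvd] at hyc
            push_cast at hyc
            obtain ⟨w, hw⟩ := hyc
            have e2 : (((p * b1v : ℕ)) : ZMod (p^r)) * (((c1v + p^(r-1)*jv : ℕ)) : ZMod (p^r))
                = ((((p:ℤ)*(b1v:ℤ)) * ((c1v:ℤ) + (p:ℤ)^(r-1)*(jv:ℤ)) : ℤ) : ZMod (p^r)) := by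
              push_cast; ring
            rw [hm, e2, ZMod.intCast_eq_intCast_iff, Int.modEq_iff_dvd]
            push_cast
            refine ⟨w - (b1v:ℤ) * jv, ?_⟩
            rw [show ((p:ℤ)^r = p * p^(r-1)) from hprr.symm,
               show ((p:ℤ)^(k+1) = p * p^k) from pow_succ' _ _]
            linear_combination (p:ℤ) * hw
          · show ¬ IsUnit (((p * b1v : ℕ)) : ZMod (p^r))
            rw [Nat.cast_mul]
            intro h
            exact not_isUnit_p hp (by omega) (isUnit_of_mul_isUnit_left h)⟩))
      constructor
      · rintro ⟨j, y⟩ ⟨j', y'⟩ hzz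
        have h1 := congrArg (fun w => w.val.1) hzz
        have h2 := congrArg (fun w => w.val.2) hzz
        simp only at h1 h2
        -- first components
        have h1' : (((p:ℤ)^1 * (y.val.1.val : ℤ) : ℤ) : ZMod (p^r))
            = (((p:ℤ)^1 * (y'.val.1.val : ℤ) : ℤ) : ZMod (p^r)) := by
          push_cast [pow_one]
          push_cast at h1
          exact h1
        have hb := cancel_pow hp (by omega : 1 ≤ r) h1'
        push_cast at hb
        have hbeq : y.val.1 = y'.val.1 := by
          simpa [ZMod.natCast_val, ZMod.cast_id] using hb
        -- second components
        have hlt : ∀ (cc : ZMod (p^(r-1))) (jj : ZMod p),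
            cc.val + p^(r-1) * jj.val < p^r := by
          intro cc jj
          calc cc.val + p^(r-1) * jj.val < p^(r-1) + p^(r-1) * jj.val := by
                have := ZMod.val_lt cc; omega
            _ = p^(r-1) * (1 + jj.val) := by ring
            _ ≤ p^(r-1) * p := by
                have := ZMod.val_lt jj
                exact Nat.mul_le_mul_left _ (by omega)
            _ = p^r := by rw [← pow_succ]; congr 1; omega
        have h2v := congrArg ZMod.val h2
        rw [ZMod.val_cast_of_lt (hlt y.val.2 j), ZMod.val_cast_of_lt (hlt y'.val.2 j')] at h2v
        have hcval : y.val.2.val = y'.val.2.val := by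
          have e := congrArg (· % p^(r-1)) h2v
          simpa [Nat.add_mul_mod_self_left, Nat.mod_eq_of_lt (ZMod.val_lt y.val.2),
            Nat.mod_eq_of_lt (ZMod.val_lt y'.val.2)] using e
        have hjval : j.val = j'.val := by
          have e := congrArg (· / p^(r-1)) h2v
          have hNpos : 0 < p^(r-1) := pow_pos hp.pos _
          simpa [Nat.add_mul_div_left _ _ hNpos, Nat.div_eq_of_lt (ZMod.val_lt y.val.2),
            Nat.div_eq_of_lt (ZMod.val_lt y'.val.2)] using e
        have : j = j' := val_inj' hjval
        subst this
        congr 1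
        exact Subtype.ext (Prod.ext hbeq (val_inj' hcval))
      · rintro ⟨⟨b, c⟩, hbc, hnb⟩
        have hpb : p ∣ b.val := by
          by_contra hnd
          apply hnb
          have hcb : Nat.Coprime b.val (p^r) :=
            Nat.Coprime.pow_right r ((hp.coprime_iff_not_dvd.mpr hnd).symm)
          have := (ZMod.isUnit_iff_coprime b.val (p^r)).mpr hcb
          simpa [ZMod.natCast_val, ZMod.cast_id] using this
        obtain ⟨B1, hB1⟩ := hpb
        have hclt : c.val < p^(r-1) * p := by
          have := ZMod.val_lt c
          rwa [show p^(r-1)*p = p^r from by rw [← pow_succ]; congr 1; omega]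
        -- the dvd fact
        have e1 : (((b.val : ℤ) * (c.val : ℤ) : ℤ) : ZMod (p^r)) = b * c := by
          push_cast
          simp [ZMod.natCast_val, ZMod.cast_id]
        have hyc := e1.trans hbc
        rw [hm] at hyc
        rw [ZMod.intCast_eq_intCast_iff, Int.modEq_iff_dvd] at hyc
        push_cast at hyc
        rw [hB1] at hyc
        have hyc2 : (p:ℤ)^(r-1) ∣ ((p:ℤ)^k * u - (B1:ℤ) * (c.val:ℤ)) := by
          have hfac : ((p:ℤ)^(k+1) * u - (p*B1:ℤ) * (c.val:ℤ))
              = (p:ℤ) * ((p:ℤ)^k * u - (B1:ℤ)*(c.val:ℤ)) := by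
            rw [show ((p:ℤ)^(k+1) = p * p^k) from pow_succ' _ _]; ring
          have := hyc
          rw [show ((p:ℤ)^r = p * p^(r-1)) from hprr.symm] at this
          rw [show (((p*B1 : ℕ):ℤ) = ((p:ℤ)*B1)) from by push_cast; ring] at this
          rw [hfac] at this
          exact (mul_dvd_mul_iff_left (by exact_mod_cast hp.ne_zero : (p:ℤ) ≠ 0)).mp this
        refine ⟨⟨((c.val / p^(r-1) : ℕ) : ZMod p),
          ⟨((B1 : ZMod (p^(r-1))), ((c.val : ℕ) : ZMod (p^(r-1)))), ?_⟩⟩, ?_⟩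
        · show ((B1 : ℕ) : ZMod (p^(r-1))) * ((c.val : ℕ) : ZMod (p^(r-1)))
            = (((p:ℤ)^k * u : ℤ) : ZMod (p^(r-1)))
          have e3 : ((B1 : ℕ) : ZMod (p^(r-1))) * ((c.val : ℕ) : ZMod (p^(r-1)))
              = (((B1:ℤ) * (c.val:ℤ) : ℤ) : ZMod (p^(r-1))) := by push_cast; ring
          rw [e3, ZMod.intCast_eq_intCast_iff, Int.modEq_iff_dvd]
          push_cast
          exact hyc2
        · apply Subtype.ext
          apply Prod.ext
          · show ((p * ((B1 : ZMod (p^(r-1))).val) : ℕ) : ZMod (p^r)) = b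
            have hvB : ((B1 : ZMod (p^(r-1))).val) = B1 % p^(r-1) := ZMod.val_natCast _ B1
            have hdv : ((p:ℤ))^r ∣ ((p * ((B1 : ZMod (p^(r-1))).val) : ℕ) : ℤ) - ((p * B1 : ℕ) : ℤ) := by
              rw [hvB]
              push_cast
              rw [← hprr, ← mul_sub]
              apply mul_dvd_mul_left
              exact ⟨-((B1:ℤ) / ((p:ℤ)^(r-1))), by rw [Int.emod_def]; ring⟩
            have hcast : (((p * ((B1 : ZMod (p^(r-1))).val) : ℕ) : ℤ) : ZMod (p^r))
                = (((p * B1 : ℕ) : ℤ) : ZMod (p^r)) := by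
              rw [ZMod.intCast_eq_intCast_iff, Int.modEq_iff_dvd]
              have h5 := dvd_neg.mpr hdv
              rw [neg_sub] at h5
              push_cast
              push_cast at h5
              exact h5
            calc ((p * ((B1 : ZMod (p^(r-1))).val) : ℕ) : ZMod (p^r))
                = (((p * ((B1 : ZMod (p^(r-1))).val) : ℕ) : ℤ) : ZMod (p^r)) := by push_cast; ring
              _ = (((p * B1 : ℕ) : ℤ) : ZMod (p^r)) := hcast
              _ = ((p * B1 : ℕ) : ZMod (p^r)) := by push_cast; ring
              _ = ((b.val : ℕ) : ZMod (p^r)) := by rw [← hB1]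
              _ = b := by simp [ZMod.natCast_val, ZMod.cast_id]
          · show ((((c.val : ℕ) : ZMod (p^(r-1))).val + p^(r-1) * (((c.val / p^(r-1) : ℕ) : ZMod p)).val : ℕ) : ZMod (p^r)) = c
            rw [ZMod.val_natCast, ZMod.val_natCast,
              Nat.mod_eq_of_lt (Nat.div_lt_of_lt_mul hclt), Nat.mod_add_div]
            simp [ZMod.natCast_val, ZMod.cast_id]
    rw [hsplit, hmunit, hnon]
    have hY : p * (p^(r-1) - p^(r-1-1)) = p^r - p^(r-1) := by
      have h1 : p^(r-1) = p^(r-1-1) * p := by rw [← pow_succ]; congr 1; omega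
      have h2 : p^r = p^(r-1) * p := by rw [← pow_succ]; congr 1; omega
      rw [mul_comm, tsub_mul, ← h1, ← h2]
    rw [show p * ((k+1) * (p^(r-1) - p^(r-1-1))) = (k+1) * (p * (p^(r-1) - p^(r-1-1))) from by ring, hY]
    generalize (p^r - p^(r-1)) = X
    ring


lemma sq_dvd_iff {p : ℕ} (hp : p.Prime) (i : ℕ) (w : ℤ) :
    (p:ℤ)^i ∣ w^2 ↔ (p:ℤ)^((i+1)/2) ∣ w := by
  haveI : Fact p.Prime := ⟨hp⟩
  constructor
  · intro h
    rcases eq_or_ne w 0 with h0 | h0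
    · simp [h0]
    rw [padicValInt_dvd_iff] at h ⊢
    rcases h with h | h
    · exact absurd h (pow_ne_zero 2 h0)
    right
    have h2 : padicValInt p (w^2) = 2 * padicValInt p w := by
      rw [sq, padicValInt.mul h0 h0]; ring
    omega
  · rintro ⟨v, hv⟩
    have h2 : w^2 = ((p:ℤ)^((i+1)/2))^2 * v^2 := by rw [hv]; ring
    rw [h2, ← pow_mul]
    exact Dvd.dvd.mul_right (pow_dvd_pow _ (by omega)) _

lemma zsum (p : ℕ) : ∀ (s r : ℕ), 1 ≤ s → 2*s - 1 < r →
    (∑ i ∈ Finset.range (2*s), ((p:ℤ))^(r - (i+1)/2)) * ((p:ℤ)^r - (p:ℤ)^(r-1))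
      = (p:ℤ)^(2*r) + (p:ℤ)^(2*r-1) - (p:ℤ)^(2*r-s) - (p:ℤ)^(2*r-s-1) := by
  intro s
  induction s with
  | zero => omega
  | succ s ih =>
    intro r hs hr
    rcases Nat.eq_zero_or_pos s with h0 | hpos
    · subst h0
      obtain ⟨d, rfl⟩ : ∃ d, r = 2 + d := ⟨r - 2, by omega⟩
      norm_num [Finset.sum_range_succ]
      simp only [show 2+d-1 = 1+d from by omega, show 2*(2+d) = 4+2*d from by omega,
        show 4+2*d-1 = 3+2*d from by omega, show 3+2*d-1 = 2+2*d from by omega,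
        show 4+2*d-2 = 2+2*d from by omega]
      ring
    · obtain ⟨d, rfl⟩ : ∃ d, r = s+1+d := ⟨r - (s+1), by omega⟩
      have hd : s + 1 ≤ d := by omega
      rw [show 2*(s+1) = (2*s)+1+1 from by ring, Finset.sum_range_succ, Finset.sum_range_succ]
      rw [add_mul, add_mul, ih (s+1+d) hpos (by omega)]
      simp only [show (2*s+1+1)/2 = s+1 from by omega, show (2*s+1)/2 = s from by omega,
        show s+1+d-(s+1) = d from by omega, show s+1+d-s = d+1 from by omega,
        show s+1+d-1 = s+d from by omega,
        show 2*(s+1+d) = 2*s+2+2*d from by omega,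
        show 2*s+2+2*d-1 = 2*s+1+2*d from by omega,
        show 2*s+2+2*d-s = s+2+2*d from by omega,
        show 2*s+2+2*d-s-1 = s+1+2*d from by omega,
        show 2*s+2+2*d-(s+1) = s+1+2*d from by omega,
        show s+2+2*d-1 = s+1+2*d from by omega,
        show s+1+2*d-1 = s+2*d from by omega,
        show 2*s+2+2*d-(s+1)-1 = s+2*d from by omega]
      ring


def sl2TraceEquiv (R : Type*) [CommRing R] (t : R) :
    {γ : Matrix.SpecialLinearGroup (Fin 2) R //
      Matrix.trace (γ : Matrix (Fin 2) (Fin 2) R) = t} ≃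
    {x : R × R × R // x.2.1 * x.2.2 = x.1 * (t - x.1) - 1} where
  toFun g := ⟨(((g.val : Matrix (Fin 2) (Fin 2) R)) 0 0,
               ((g.val : Matrix (Fin 2) (Fin 2) R)) 0 1,
               ((g.val : Matrix (Fin 2) (Fin 2) R)) 1 0), by
    set M : Matrix (Fin 2) (Fin 2) R := (g.val : Matrix (Fin 2) (Fin 2) R) with hM
    have hdet : M 0 0 * M 1 1 - M 0 1 * M 1 0 = 1 := by
      rw [← Matrix.det_fin_two]
      exact g.val.property
    have htr : M 0 0 + M 1 1 = t := by
      rw [← Matrix.trace_fin_two]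
      exact g.property
    show M 0 1 * M 1 0 = M 0 0 * (t - M 0 0) - 1
    linear_combination (-1 : R) * hdet + M 0 0 * htr⟩
  invFun x := ⟨⟨!![x.val.1, x.val.2.1; x.val.2.2, t - x.val.1], by
      rw [Matrix.det_fin_two_of]
      linear_combination -x.property⟩, by
      show Matrix.trace !![x.val.1, x.val.2.1; x.val.2.2, t - x.val.1] = t
      rw [Matrix.trace_fin_two]
      simp⟩
  left_inv := by
    rintro ⟨⟨M, hdet⟩, htr⟩
    apply Subtype.ext
    apply Subtype.ext
    show !![M 0 0, M 0 1; M 1 0, t - M 0 0] = M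
    have htr' : M 0 0 + M 1 1 = t := by
      rw [← Matrix.trace_fin_two]
      exact htr
    ext i j
    fin_cases i <;> fin_cases j <;> simp
    linear_combination -htr'
  right_inv := by
    rintro ⟨⟨a, b, c⟩, hx⟩
    apply Subtype.ext
    show (_, _, _) = (a, b, c)
    simp

theorem stmt_9 (p : ℕ) [Fact p.Prime] (hp : Odd p) (r l : ℕ) (hl : 1 ≤ l) (hlr : l < r)
    (hlodd : Odd l) (t : ℤ)
    (hdvd : (p : ℤ) ^ l ∣ t ^ 2 - 4) (hndvd : ¬ (p : ℤ) ^ (l + 1) ∣ t ^ 2 - 4) :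
    Nat.card {γ : Matrix.SpecialLinearGroup (Fin 2) (ZMod (p ^ r)) //
        Matrix.trace (γ : Matrix (Fin 2) (Fin 2) (ZMod (p ^ r))) = (t : ZMod (p ^ r))}
      = p ^ (2 * r) + p ^ (2 * r - 1) - p ^ (2 * r - (l + 1) / 2) - p ^ (2 * r - (l + 3) / 2) := by
  classical
  have hp' : p.Prime := Fact.out
  haveI : NeZero (p^r) := ⟨pow_ne_zero _ hp'.ne_zero⟩
  have hlo : l % 2 = 1 := Nat.odd_iff.mp hlodd
  have hpo : p % 2 = 1 := Nat.odd_iff.mp hp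
  have hp2 : ¬ (p:ℤ) ∣ 2 := by
    intro h
    have h2 : p ∣ 2 := by exact_mod_cast h
    have := (Nat.prime_dvd_prime_iff_eq hp' Nat.prime_two).mp h2
    omega
  have hpZ : Prime ((p:ℤ)) := Nat.prime_iff_prime_int.mp hp'
  have hp4 : ¬ (p:ℤ) ∣ (-4 : ℤ) := by
    intro h
    rw [dvd_neg] at h
    have h4 : (p:ℤ) ∣ 2 * 2 := by exact_mod_cast h
    rcases hpZ.dvd_mul.mp h4 with h | h <;> exact hp2 h
  set A : ZMod (p^r) → ℤ := fun a => ((a.val : ℕ) : ℤ) with hA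
  set mI : ZMod (p^r) → ℤ := fun a => A a * (t - A a) - 1 with hmI
  have hE : ∀ a, (2*A a - t)^2 - (t^2 - 4) = -4 * mI a := by intro a; simp only [hmI]; ring
  have hw2 : ∀ a, ¬ (p:ℤ)^(l+1) ∣ ((2*A a - t)^2 - (t^2-4)) := by
    intro a h
    have h1 : (p:ℤ)^l ∣ (2*A a - t)^2 := by
      have ha : (p:ℤ)^l ∣ ((2*A a - t)^2 - (t^2-4)) := (pow_dvd_pow _ (by omega)).trans h
      have := dvd_add ha hdvd
      rwa [sub_add_cancel] at this
    have h2 : (p:ℤ)^((l+1)/2) ∣ (2*A a - t) := (sq_dvd_iff hp' l _).mp h1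
    have h3 : (p:ℤ)^(l+1) ∣ (2*A a - t)^2 := by
      obtain ⟨v, hv⟩ := h2
      refine ⟨v^2, ?_⟩
      have hexp : ((p:ℤ)^((l+1)/2))^2 = (p:ℤ)^(l+1) := by
        rw [← pow_mul]; congr 1; omega
      calc (2*A a - t)^2 = ((p:ℤ)^((l+1)/2))^2 * v^2 := by rw [hv]; ring
        _ = (p:ℤ)^(l+1) * v^2 := by rw [hexp]
    have h4 := dvd_sub h3 h
    rw [show (2*A a - t)^2 - ((2*A a - t)^2 - (t^2-4)) = t^2 - 4 from by ring] at h4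
    exact hndvd h4
  have hm0 : ∀ a, mI a ≠ 0 := by
    intro a h
    apply hw2 a
    rw [hE a, h]
    simp
  set k : ZMod (p^r) → ℕ := fun a => padicValInt p (mI a) with hk
  have hk_le : ∀ a, k a ≤ l := by
    intro a
    by_contra hlt
    apply hw2 a
    rw [hE a]
    exact Dvd.dvd.mul_left ((pow_dvd_pow _ (by omega : l+1 ≤ k a)).trans (padicValInt_dvd _)) _
  have hdvd_iff : ∀ i, i ≤ l → ∀ a, ((p:ℤ)^i ∣ mI a ↔ (p:ℤ)^((i+1)/2) ∣ (2*A a - t)) := by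
    intro i hi a
    have c4 : IsCoprime ((p:ℤ)^i) (-4 : ℤ) := (coprime_pow_of_not_dvd hp' hp4).symm
    constructor
    · intro h
      have hE' : (p:ℤ)^i ∣ (2*A a - t)^2 := by
        have h1 : (p:ℤ)^i ∣ -4 * mI a := h.mul_left _
        rw [← hE a] at h1
        have h2 : (p:ℤ)^i ∣ t^2-4 := (pow_dvd_pow _ hi).trans hdvd
        have h3 := dvd_add h1 h2
        rwa [sub_add_cancel] at h3
      exact (sq_dvd_iff hp' i _).mp hE'
    · intro h
      have hE' : (p:ℤ)^i ∣ -4 * mI a := by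
        rw [← hE a]
        exact dvd_sub ((sq_dvd_iff hp' i _).mpr h) ((pow_dvd_pow _ hi).trans hdvd)
      exact c4.dvd_of_dvd_mul_left hE'
  rw [Nat.card_congr (sl2TraceEquiv (ZMod (p^r)) (t : ZMod (p^r)))]
  rw [Nat.card_congr (Equiv.subtypeProdEquivSigmaSubtype
      (fun (a : ZMod (p^r)) (y : ZMod (p^r) × ZMod (p^r)) =>
        y.1 * y.2 = a * ((t:ZMod (p^r)) - a) - 1))]
  rw [Nat.card_eq_fintype_card, Fintype.card_sigma]
  have hcard_a : ∀ a : ZMod (p^r),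
      Fintype.card {y : ZMod (p^r) × ZMod (p^r) // y.1 * y.2 = a * ((t:ZMod (p^r)) - a) - 1}
        = (k a + 1) * (p^r - p^(r-1)) := by
    intro a
    obtain ⟨u, hu⟩ := padicValInt_dvd (p := p) (mI a)
    have hpu : ¬ (p:ℤ) ∣ u := by
      intro hdu
      obtain ⟨u', hu'⟩ := hdu
      have hdd : (p:ℤ)^(k a + 1) ∣ mI a := ⟨u', by rw [hu, hu']; ring⟩
      rw [padicValInt_dvd_iff] at hdd
      rcases hdd with h | h
      · exact hm0 a h
      · have hkk : k a = padicValInt p (mI a) := rfl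
        omega
    have hmc : ((mI a : ℤ) : ZMod (p^r)) = a * ((t:ZMod (p^r)) - a) - 1 := by
      show ((((a.val:ℕ):ℤ) * (t - ((a.val:ℕ):ℤ)) - 1 : ℤ) : ZMod (p^r)) = _
      push_cast
      simp [ZMod.natCast_val, ZMod.cast_id]
    rw [← Nat.card_eq_fintype_card, ← hmc, hu]
    exact pairs_card hp' (k a) r (by have := hk_le a; omega) u hpu
  rw [Finset.sum_congr rfl (fun a _ => hcard_a a), ← Finset.sum_mul]
  have hsum : (∑ a : ZMod (p^r), (k a + 1)) = ∑ i ∈ Finset.range (l+1), p^(r - (i+1)/2) := by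
    have h1 : ∀ a : ZMod (p^r), k a + 1
        = ∑ i ∈ Finset.range (l+1), if (p:ℤ)^i ∣ mI a then 1 else 0 := by
      intro a
      rw [← Finset.card_filter]
      have hfe : Finset.filter (fun i => (p:ℤ)^i ∣ mI a) (Finset.range (l+1))
          = Finset.range (k a + 1) := by
        ext i
        simp only [Finset.mem_filter, Finset.mem_range]
        rw [padicValInt_dvd_iff, ← show k a = padicValInt p (mI a) from rfl]
        have h5 := hk_le a
        have h6 := hm0 a
        constructor
        · rintro ⟨hh1, hh2 | hh3⟩
          · exact absurd hh2 h6
          · omega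
        · intro hh
          exact ⟨by omega, Or.inr (by omega)⟩
      rw [hfe, Finset.card_range]
    rw [Finset.sum_congr rfl (fun a _ => h1 a), Finset.sum_comm]
    apply Finset.sum_congr rfl
    intro i hi
    have hil : i ≤ l := by have := Finset.mem_range.mp hi; omega
    rw [← Finset.card_filter]
    -- get c with 2c ≡ t mod p^((i+1)/2)
    obtain ⟨x, y, hxy⟩ := coprime_pow_of_not_dvd hp' hp2 (r := (i+1)/2)
    have hc : ∀ a : ZMod (p^r),
        ((p:ℤ)^((i+1)/2) ∣ 2*A a - t ↔ (p:ℤ)^((i+1)/2) ∣ A a - x*t) := by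
      intro a
      constructor
      · rintro ⟨v, hv⟩
        have h2 : ((p:ℤ)^((i+1)/2)) ∣ 2*(A a - x*t) := ⟨v + t*y, by linear_combination hv - t*hxy⟩
        have hcop : IsCoprime ((p:ℤ)^((i+1)/2)) (2:ℤ) := IsCoprime.symm ⟨x, y, hxy⟩
        exact hcop.dvd_of_dvd_mul_left h2
      · rintro ⟨v, hv⟩
        exact ⟨2*v - t*y, by linear_combination 2*hv + t*hxy⟩
    have hfe2 : Finset.filter (fun a : ZMod (p^r) => (p:ℤ)^i ∣ mI a) Finset.univ
        = Finset.filter (fun a : ZMod (p^r) => (p:ℤ)^((i+1)/2) ∣ (((a.val:ℕ):ℤ) - x*t)) Finset.univ := by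
      apply Finset.filter_congr
      intro a _
      rw [hdvd_iff i hil a, hc a]
    rw [hfe2, ← Fintype.card_subtype, ← Nat.card_eq_fintype_card]
    exact fiber_count hp' (by omega : (i+1)/2 ≤ r) (x*t)
  rw [hsum]
  -- final arithmetic
  set s := (l+1)/2 with hs
  rw [show l + 1 = 2*s from by omega, show (l+3)/2 = s+1 from by omega,
    show 2*r - (s+1) = 2*r - s - 1 from by omega]
  rw [Nat.sub_sub]
  apply Nat.eq_sub_of_add_eq
  have hple : p^(r-1) ≤ p^r := Nat.pow_le_pow_right hp'.pos (by omega)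
  have hz := zsum p s r (by omega) (by omega)
  zify [hple]
  push_cast
  linear_combination hz
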